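/- arXiv:2106.12228 — 8 statements merged into one kernel-verified Lean document; each statement's English description precedes it below -/
import Mathlib

section
/- Let M ∈ ℕ, let 𝒢 = (G_1, …, G_G) be a partition of Fin M into G nonempty pairwise disjoint groups whose union is Fin M, and let v : Finset (Fin M) → ℝ be separable over 𝒢 with component functions w_1, …, w_G. Then for every i and every feature j ∈ G_i, the Shapley value φ_j(v) = ∑_{S ⊆ univ \ {j}} |S|!·(M−|S|−1)!/M! · (v(S ∪ {j}) − v(S)) simplifies to a sum over subsets of G_i only: φ_j(v) = ∑_{S ⊆ G_i \ {j}} |S|!·(|G_i|−|S|−1)!/|G_i|! · (w_i(S ∪ {j}) − w_i(S)). (Theorem 2.1, simplified feature-wise Shapley formula.) -/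
open Finset


noncomputable def defC (M t : ℕ) : ℝ :=
  ((t.factorial * (M - t - 1).factorial : ℕ) : ℝ) / (M.factorial : ℕ)

lemma defC_rec (M t : ℕ) (h : t < M) :
    defC M t = defC (M + 1) t + defC (M + 1) (t + 1) := by
  obtain ⟨k, rfl⟩ : ∃ k, M = t + k + 1 := ⟨M - t - 1, by omega⟩
  unfold defC
  have h1 : t + k + 1 - t - 1 = k := by omega
  have h2 : t + k + 1 + 1 - t - 1 = k + 1 := by omega
  have h3 : t + k + 1 + 1 - (t + 1) - 1 = k := by omega
  rw [h1, h2, h3]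
  rw [show t + k + 1 + 1 = (t + k + 1) + 1 from rfl, Nat.factorial_succ (t + k + 1),
    show t + k + 1 = (t + k) + 1 from rfl, Nat.factorial_succ (t + k),
    Nat.factorial_succ k, Nat.factorial_succ t]
  push_cast
  have h4 : ((t + k).factorial : ℝ) ≠ 0 := by positivity
  field_simp
  ring

lemma pascal_sum (n : ℕ) (a : ℕ → ℝ) :
    ∑ r ∈ Finset.range (n + 2), (((n + 1).choose r : ℕ) : ℝ) * a r
      = ∑ r ∈ Finset.range (n + 1), ((n.choose r : ℕ) : ℝ) * (a r + a (r + 1)) := by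
  rw [Finset.sum_range_succ' (fun r => (((n + 1).choose r : ℕ) : ℝ) * a r) (n + 1)]
  simp only [Nat.choose_succ_succ, Nat.choose_zero_right, Nat.cast_add, Nat.cast_one, one_mul,
    add_mul, mul_add, Finset.sum_add_distrib]
  have h2 : ∑ r ∈ Finset.range (n + 1), ((n.choose (r + 1) : ℕ) : ℝ) * a (r + 1) + a 0
      = ∑ r ∈ Finset.range (n + 1), ((n.choose r : ℕ) : ℝ) * a r := by
    have e := Finset.sum_range_succ' (fun r => ((n.choose r : ℕ) : ℝ) * a r) (n + 1)
    simp only [Nat.choose_zero_right, Nat.cast_one, one_mul] at e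
    rw [← e, Finset.sum_range_succ]
    simp [Nat.choose_succ_self]
  linarith [h2]

lemma key_sum (g : ℕ) : ∀ n t, t < g →
    ∑ r ∈ Finset.range (n + 1), ((n.choose r : ℕ) : ℝ) * defC (g + n) (t + r) = defC g t := by
  intro n
  induction n with
  | zero => intro t ht; simp
  | succ n ih =>
    intro t ht
    have hgn : g + (n + 1) = g + n + 1 := rfl
    rw [show n + 1 + 1 = n + 2 from rfl,
      pascal_sum n (fun r => defC (g + (n + 1)) (t + r))]
    have : ∀ r ∈ Finset.range (n + 1),
        ((n.choose r : ℕ) : ℝ) * (defC (g + (n + 1)) (t + r) + defC (g + (n + 1)) (t + (r + 1)))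
        = ((n.choose r : ℕ) : ℝ) * defC (g + n) (t + r) := by
      intro r hr
      rw [show g + (n + 1) = (g + n) + 1 from rfl, show t + (r + 1) = (t + r) + 1 from rfl,
        ← defC_rec (g + n) (t + r) (by simp at hr; omega)]
    rw [Finset.sum_congr rfl this, ih t ht]

lemma sum_powerset_union_disjoint {α : Type*} [DecidableEq α] {A B : Finset α}
    (h : Disjoint A B) (f : Finset α → ℝ) :
    ∑ S ∈ (A ∪ B).powerset, f S = ∑ T ∈ A.powerset, ∑ R ∈ B.powerset, f (T ∪ R) := by
  rw [← Finset.sum_product']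
  refine (Finset.sum_nbij' (fun p => p.1 ∪ p.2) (fun S => (S ∩ A, S ∩ B)) ?_ ?_ ?_ ?_ ?_).symm
  · rintro ⟨T, R⟩ hp
    simp only [Finset.mem_product, Finset.mem_powerset] at hp ⊢
    exact Finset.union_subset_union hp.1 hp.2
  · intro S hS
    simp only [Finset.mem_product, Finset.mem_powerset]
    exact ⟨Finset.inter_subset_right, Finset.inter_subset_right⟩
  · rintro ⟨T, R⟩ hp
    simp only [Finset.mem_product, Finset.mem_powerset] at hp
    have hd := Finset.disjoint_left.1 h
    have h1 : (T ∪ R) ∩ A = T := by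
      ext x
      simp only [Finset.mem_inter, Finset.mem_union]
      constructor
      · rintro ⟨hx | hx, hA⟩
        · exact hx
        · exact absurd (hp.2 hx) (fun hB => hd hA hB)
      · intro hx; exact ⟨Or.inl hx, hp.1 hx⟩
    have h2 : (T ∪ R) ∩ B = R := by
      ext x
      simp only [Finset.mem_inter, Finset.mem_union]
      constructor
      · rintro ⟨hx | hx, hB⟩
        · exact absurd hB (hd (hp.1 hx))
        · exact hx
      · intro hx; exact ⟨Or.inr hx, hp.2 hx⟩
    simp [h1, h2]
  · intro S hS
    simp only [Finset.mem_powerset] at hS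
    simp only [← Finset.inter_union_distrib_left]
    exact Finset.inter_eq_left.2 hS
  · rintro ⟨T, R⟩ _; rfl


/-- The feature-wise Shapley value of feature `j` for contribution function `v`. -/
noncomputable def shapley {M : ℕ} (v : Finset (Fin M) → ℝ) (j : Fin M) : ℝ :=
  ∑ S ∈ (Finset.univ.erase j).powerset,
    ((S.card.factorial * (M - S.card - 1).factorial : ℕ) : ℝ) / (M.factorial : ℕ) *
      (v (insert j S) - v S)

/-- Theorem 2.1 (simplified feature-wise Shapley formula): if `v` is separable over the
partition `G` with component functions `w`, then the Shapley value of a feature `j ∈ G i`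
is given by the Shapley formula restricted to the group `G i`, with contribution `w i`. -/
theorem simplified_featurewise_shapley
    (M Gn : ℕ) (G : Fin Gn → Finset (Fin M))
    (hne : ∀ i, (G i).Nonempty)
    (hdisj : ∀ i j : Fin Gn, i ≠ j → Disjoint (G i) (G j))
    (hcover : Finset.univ.biUnion G = (Finset.univ : Finset (Fin M)))
    (v : Finset (Fin M) → ℝ) (w : Fin Gn → Finset (Fin M) → ℝ)
    (hsep : ∀ S : Finset (Fin M), v S = ∑ i, w i (S ∩ G i))
    (i : Fin Gn) (j : Fin M) (hj : j ∈ G i) :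
    shapley v j =
      ∑ S ∈ ((G i).erase j).powerset,
        ((S.card.factorial * ((G i).card - S.card - 1).factorial : ℕ) : ℝ) /
          ((G i).card.factorial : ℕ) * (w i (insert j S) - w i S) := by

  classical
  set g := (G i).card with hg
  set A := (G i).erase j with hA
  set B := (univ : Finset (Fin M)) \ G i with hB
  have hAsub : A ⊆ G i := Finset.erase_subset _ _
  have hAB : Disjoint A B := by
    refine Finset.disjoint_left.2 ?_
    intro x hx hxB
    rw [hB, Finset.mem_sdiff] at hxB
    exact hxB.2 (hAsub hx)
  have hU : A ∪ B = Finset.univ.erase j := by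
    ext x
    simp only [hA, hB, Finset.mem_union, Finset.mem_erase, Finset.mem_sdiff, Finset.mem_univ,
      and_true, true_and]
    constructor
    · rintro (⟨hxj, _⟩ | hx)
      · exact hxj
      · rintro rfl; exact hx hj
    · intro hxj
      by_cases hx : x ∈ G i
      · exact Or.inl ⟨hxj, hx⟩
      · exact Or.inr hx
  have hgM : g ≤ M := by
    have := Finset.card_le_card (Finset.subset_univ (G i))
    simpa using this
  have hBcard : B.card = M - g := by
    rw [hB, Finset.card_sdiff_of_subset (Finset.subset_univ _)]
    simp [hg]
  have hdiff : ∀ S : Finset (Fin M),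
      v (insert j S) - v S = w i (insert j (S ∩ G i)) - w i (S ∩ G i) := by
    intro S
    rw [hsep, hsep, ← Finset.sum_sub_distrib]
    rw [Fintype.sum_eq_single i ?_]
    · rw [Finset.insert_inter_of_mem hj]
    · intro k hk
      rw [Finset.insert_inter_of_notMem, sub_self]
      exact fun hjk => (Finset.disjoint_left.1 (hdisj i k (Ne.symm hk)) hj) hjk
  unfold shapley
  rw [← hU, sum_powerset_union_disjoint hAB]
  have main : ∀ T ∈ A.powerset,
      (∑ R ∈ B.powerset,
        (((T ∪ R).card.factorial * (M - (T ∪ R).card - 1).factorial : ℕ) : ℝ) /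
          (M.factorial : ℕ) * (v (insert j (T ∪ R)) - v (T ∪ R)))
      = defC g T.card * (w i (insert j T) - w i T) := by
    intro T hT
    rw [Finset.mem_powerset] at hT
    have hTG : T ⊆ G i := hT.trans hAsub
    have step1 : ∀ R ∈ B.powerset,
        (((T ∪ R).card.factorial * (M - (T ∪ R).card - 1).factorial : ℕ) : ℝ) /
          (M.factorial : ℕ) * (v (insert j (T ∪ R)) - v (T ∪ R))
        = defC M (T.card + R.card) * (w i (insert j T) - w i T) := by
      intro R hR
      rw [Finset.mem_powerset] at hR
      have hdTR : Disjoint T R := hAB.mono hT hR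
      have hcard : (T ∪ R).card = T.card + R.card := Finset.card_union_of_disjoint hdTR
      have hRG : (T ∪ R) ∩ G i = T := by
        ext x
        simp only [Finset.mem_inter, Finset.mem_union]
        constructor
        · rintro ⟨hx | hx, hxG⟩
          · exact hx
          · have := hR hx
            rw [hB, Finset.mem_sdiff] at this
            exact absurd hxG this.2
        · intro hx; exact ⟨Or.inl hx, hTG hx⟩
      rw [hdiff, hRG, hcard]
      rfl
    rw [Finset.sum_congr rfl step1, ← Finset.sum_mul]
    congr 1
    rw [Finset.sum_powerset]
    have inner : ∀ r ∈ Finset.range (B.card + 1),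
        ∑ R ∈ B.powersetCard r, defC M (T.card + R.card)
          = ((B.card.choose r : ℕ) : ℝ) * defC M (T.card + r) := by
      intro r _
      rw [Finset.sum_congr rfl (fun R hR => by rw [(Finset.mem_powersetCard.1 hR).2])]
      rw [Finset.sum_const, Finset.card_powersetCard, nsmul_eq_mul]
    rw [Finset.sum_congr rfl inner, hBcard]
    have hM : M = g + (M - g) := by omega
    have ht : T.card < g := by
      have h1 := Finset.card_le_card hT
      have hgpos : 0 < g := Finset.card_pos.2 (hne i)
      rw [hA, Finset.card_erase_of_mem hj, ← hg] at h1
      omega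
    calc ∑ r ∈ Finset.range (M - g + 1), (((M - g).choose r : ℕ) : ℝ) * defC M (T.card + r)
        = ∑ r ∈ Finset.range (M - g + 1),
            (((M - g).choose r : ℕ) : ℝ) * defC (g + (M - g)) (T.card + r) := by rw [← hM]
      _ = defC g T.card := key_sum g (M - g) T.card ht
  rw [Finset.sum_congr rfl main]
  exact Finset.sum_congr rfl (fun T _ => rfl)
end

section
/- Let M ∈ ℕ, let 𝒢 = (G_1, …, G_G) be a partition of Fin M into G nonempty pairwise disjoint groups whose union is Fin M, and let v : Finset (Fin M) → ℝ be separable over 𝒢 with component functions w_1, …, w_G. Then for every i = 1, …, G, the post-grouped Shapley value of group G_i satisfies ∑_{j ∈ G_i} φ_j(v) = w_i(G_i) − w_i(∅). (First equality of Theorem 2.2.) -/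
open Finset

noncomputable def shapCoef (M s : ℕ) : ℝ :=
  ((s.factorial * (M - s - 1).factorial : ℕ) : ℝ) / (M.factorial : ℕ)

lemma coef_lemma (M t : ℕ) (hM : 0 < M) (ht : t ≤ M) :
    (t : ℝ) * shapCoef M (t - 1) - ((M - t : ℕ) : ℝ) * shapCoef M t
      = if t = M then 1 else if t = 0 then -1 else 0 := by
  have hd : (M.factorial : ℝ) ≠ 0 := Nat.cast_ne_zero.2 (Nat.factorial_pos M).ne'
  have hk : (M : ℝ) * ((M - 1).factorial : ℕ) = (M.factorial : ℕ) := by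
    exact_mod_cast Nat.mul_factorial_pred hM.ne'
  unfold shapCoef
  rcases eq_or_ne t 0 with rfl | ht0
  · rw [if_neg hM.ne, if_pos rfl]
    simp only [Nat.cast_zero, zero_mul, zero_sub, Nat.sub_zero, Nat.factorial_zero, one_mul]
    rw [neg_inj, mul_div_assoc', div_eq_one_iff_eq hd]
    exact hk
  · rcases eq_or_ne t M with rfl | htM
    · rw [if_pos rfl]
      have e0 : t - (t - 1) - 1 = 0 := by omega
      rw [e0]
      simp only [Nat.sub_self, Nat.cast_zero, zero_mul, sub_zero, Nat.factorial_zero, mul_one]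
      rw [mul_div_assoc', div_eq_one_iff_eq hd]
      exact hk
    · rw [if_neg htM, if_neg ht0]
      have h1 : t * ((t - 1).factorial * (M - (t - 1) - 1).factorial)
          = (M - t) * (t.factorial * (M - t - 1).factorial) := by
        have e1 : M - (t - 1) - 1 = M - t := by omega
        have e2 : t * (t - 1).factorial = t.factorial := Nat.mul_factorial_pred (by omega)
        have e3 : (M - t) * (M - t - 1).factorial = (M - t).factorial :=
          Nat.mul_factorial_pred (by omega)
        calc t * ((t - 1).factorial * (M - (t - 1) - 1).factorial)
            = (t * (t - 1).factorial) * (M - t).factorial := by rw [e1]; ring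
          _ = t.factorial * ((M - t) * (M - t - 1).factorial) := by rw [e2, e3]
          _ = (M - t) * (t.factorial * (M - t - 1).factorial) := by ring
      rw [mul_div_assoc', mul_div_assoc', ← sub_div, div_eq_zero_iff]
      left
      rw [sub_eq_zero]
      exact_mod_cast h1

lemma shapley_step1 {M : ℕ} (v : Finset (Fin M) → ℝ) (j : Fin M) :
    shapley v j = ∑ T ∈ (Finset.univ : Finset (Fin M)).powerset,
      (if j ∈ T then shapCoef M (T.card - 1) else -(shapCoef M T.card)) * v T := by
  classical
  have hj : j ∉ Finset.univ.erase j := notMem_erase j _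
  have huniv : insert j (Finset.univ.erase j) = Finset.univ := insert_erase (mem_univ j)
  have hpt : ∀ S ∈ (Finset.univ.erase j).powerset,
      shapCoef M S.card * (v (insert j S) - v S)
        = (if j ∈ S then shapCoef M (S.card - 1) else -(shapCoef M S.card)) * v S
          + (if j ∈ insert j S then shapCoef M ((insert j S).card - 1)
              else -(shapCoef M (insert j S).card)) * v (insert j S) := by
    intro S hS
    have hjS : j ∉ S := fun h => (mem_erase.1 (mem_powerset.1 hS h)).1 rfl
    rw [if_pos (mem_insert_self j S), if_neg hjS, card_insert_of_notMem hjS,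
      Nat.add_sub_cancel]
    ring
  have : shapley v j = ∑ S ∈ (Finset.univ.erase j).powerset,
      ((if j ∈ S then shapCoef M (S.card - 1) else -(shapCoef M S.card)) * v S
        + (if j ∈ insert j S then shapCoef M ((insert j S).card - 1)
            else -(shapCoef M (insert j S).card)) * v (insert j S)) :=
    Finset.sum_congr rfl hpt
  rw [this, Finset.sum_add_distrib, ← huniv, Finset.sum_powerset_insert hj, huniv]

lemma shapley_efficiency {M : ℕ} (hM : 0 < M) (v : Finset (Fin M) → ℝ) :
    ∑ j : Fin M, shapley v j = v Finset.univ - v ∅ := by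
  classical
  calc ∑ j : Fin M, shapley v j
      = ∑ j : Fin M, ∑ T ∈ (Finset.univ : Finset (Fin M)).powerset,
          (if j ∈ T then shapCoef M (T.card - 1) else -(shapCoef M T.card)) * v T :=
        Finset.sum_congr rfl fun j _ => shapley_step1 v j
    _ = ∑ T ∈ (Finset.univ : Finset (Fin M)).powerset, ∑ j : Fin M,
          (if j ∈ T then shapCoef M (T.card - 1) else -(shapCoef M T.card)) * v T :=
        Finset.sum_comm
    _ = ∑ T ∈ (Finset.univ : Finset (Fin M)).powerset,
          (if T = Finset.univ then 1 else if T = ∅ then -1 else 0) * v T := by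
        refine Finset.sum_congr rfl fun T hT => ?_
        rw [← Finset.sum_mul]
        congr 1
        have h1 : Finset.univ.filter (fun j => j ∈ T) = T := by ext x; simp
        have h2 : Finset.univ.filter (fun j => j ∉ T) = Tᶜ := by ext x; simp
        have hcard : T.card ≤ M := by
          simpa using T.card_le_univ
        rw [Finset.sum_ite, Finset.sum_const, Finset.sum_const, h1, h2, card_compl,
          Fintype.card_fin, nsmul_eq_mul, nsmul_eq_mul, mul_neg, ← sub_eq_add_neg,
          coef_lemma M T.card hM hcard]
        have e1 : (T.card = M) = (T = Finset.univ) :=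
          propext ⟨fun h => T.card_eq_iff_eq_univ.mp (by simp [h]),
            fun h => by simp [h, card_univ]⟩
        have e2 : (T.card = 0) = (T = ∅) := propext Finset.card_eq_zero
        simp only [e1, e2]
    _ = v Finset.univ - v ∅ := by
        have hne : (Finset.univ : Finset (Fin M)) ≠ ∅ :=
          Finset.Nonempty.ne_empty ⟨⟨0, hM⟩, mem_univ _⟩
        have : ∀ T ∈ (Finset.univ : Finset (Fin M)).powerset,
            (if T = Finset.univ then 1 else if T = ∅ then -1 else 0) * v T
              = (if T = Finset.univ then v T else 0) + (if T = ∅ then -(v T) else 0) := by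
          intro T _
          by_cases h1 : T = Finset.univ
          · subst h1; rw [if_pos rfl, if_pos rfl, if_neg hne]; ring
          · by_cases h2 : T = ∅
            · subst h2; rw [if_neg h1, if_neg h1, if_pos rfl, if_pos rfl]; ring
            · rw [if_neg h1, if_neg h1, if_neg h2, if_neg h2]; ring
        rw [Finset.sum_congr rfl this, Finset.sum_add_distrib,
          Finset.sum_ite_eq' _ (Finset.univ : Finset (Fin M)) (fun T => v T),
          Finset.sum_ite_eq' _ (∅ : Finset (Fin M)) (fun T => -(v T)),
          if_pos (mem_powerset_self _), if_pos (mem_powerset.2 (empty_subset _))]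
        ring

/-- First equality of Theorem 2.2: under separability of `v` over the partition `G` with
component functions `w`, the post-grouped Shapley value of group `G i` equals
`w i (G i) - w i ∅`. -/
theorem postgrouped_shapley_eq
    (M Gn : ℕ) (G : Fin Gn → Finset (Fin M))
    (hne : ∀ i, (G i).Nonempty)
    (hdisj : ∀ i j : Fin Gn, i ≠ j → Disjoint (G i) (G j))
    (hcover : Finset.univ.biUnion G = (Finset.univ : Finset (Fin M)))
    (v : Finset (Fin M) → ℝ) (w : Fin Gn → Finset (Fin M) → ℝ)
    (hsep : ∀ S : Finset (Fin M), v S = ∑ i, w i (S ∩ G i))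
    (i : Fin Gn) :
    ∑ j ∈ G i, shapley v j = w i (G i) - w i ∅ := by
  classical
  obtain ⟨j0, hj0⟩ := hne i
  have hM : 0 < M := j0.pos
  set v' : Finset (Fin M) → ℝ := fun S => w i (S ∩ G i) with hv'
  have hA : ∀ j ∈ G i, shapley v j = shapley v' j := by
    intro j hj
    unfold shapley
    refine Finset.sum_congr rfl fun S hS => ?_
    congr 1
    rw [hsep, hsep, ← Finset.sum_sub_distrib, Finset.sum_eq_single i]
    · intro k _ hk
      have hjk : j ∉ G k := fun h =>
        Finset.disjoint_left.mp (hdisj i k (fun e => hk (e.symm))) hj h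
      rw [Finset.insert_inter_of_notMem hjk, sub_self]
    · intro h; exact absurd (mem_univ i) h
  have hB : ∀ j : Fin M, j ∉ G i → shapley v' j = 0 := by
    intro j hj
    unfold shapley
    apply Finset.sum_eq_zero
    intro S _
    have : insert j S ∩ G i = S ∩ G i := Finset.insert_inter_of_notMem hj
    simp [hv', this]
  rw [Finset.sum_congr rfl hA,
    Finset.sum_subset (subset_univ (G i)) (fun j _ hj => hB j hj),
    shapley_efficiency hM]
  simp [hv']
end

section
/- Let M, g, s ∈ ℕ with 1 ≤ g ≤ M and s ≤ g − 1, and let A be a finite set with |A| = M − g (the complement of a group of size g in a feature set of size M). Then ∑_{S_0 ⊆ A} (s + |S_0|)! · (M − s − |S_0| − 1)! / M! = s! · (g − s − 1)! / g!, where the sum runs over all subsets S_0 of A. -/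
open Finset

lemma pascal_fact (j t : ℕ) :
    ((j.factorial * (t+1).factorial : ℕ) : ℝ) / ((j+t+2).factorial : ℕ)
      + (((j+1).factorial * t.factorial : ℕ) : ℝ) / ((j+t+2).factorial : ℕ)
      = ((j.factorial * t.factorial : ℕ) : ℝ) / ((j+t+1).factorial : ℕ) := by
  have h1 : (j+t+2).factorial = (j+t+2) * (j+t+1).factorial := Nat.factorial_succ _
  have h2 : (t+1).factorial = (t+1) * t.factorial := Nat.factorial_succ _
  have h3 : (j+1).factorial = (j+1) * j.factorial := Nat.factorial_succ _
  have hf : ((j+t+1).factorial : ℝ) ≠ 0 := by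
    exact_mod_cast Nat.factorial_ne_zero _
  have hM : ((j:ℝ)+t+2) ≠ 0 := by positivity
  rw [h1, h2, h3]
  push_cast
  field_simp
  ring

/-- The combinatorial identity: for `1 ≤ g ≤ M`, `s ≤ g - 1` and any finite set `A` of
cardinality `M - g`, summing the `M`-feature Shapley weights over all subsets of `A`
collapses to the `g`-feature Shapley weight. -/
theorem shapley_weight_collapse {α : Type*} [DecidableEq α]
    (M g s : ℕ) (hg1 : 1 ≤ g) (hgM : g ≤ M) (hs : s ≤ g - 1)
    (A : Finset α) (hA : A.card = M - g) :
    ∑ S0 ∈ A.powerset,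
      (((s + S0.card).factorial * (M - s - S0.card - 1).factorial : ℕ) : ℝ) /
        (M.factorial : ℕ) =
      ((s.factorial * (g - s - 1).factorial : ℕ) : ℝ) / (g.factorial : ℕ) := by
  induction A using Finset.induction generalizing M with
  | empty =>
    simp only [card_empty] at hA
    have hM : M = g := by omega
    subst hM
    simp
  | @insert a A ha ih =>
    rw [card_insert_of_notMem ha] at hA
    have hM1 : g ≤ M - 1 := by omega
    have hA' : A.card = (M - 1) - g := by omega
    rw [Finset.sum_powerset_insert ha, ← Finset.sum_add_distrib]
    rw [← ih (M-1) hM1 hA']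
    apply Finset.sum_congr rfl
    intro S0 hS0
    rw [Finset.mem_powerset] at hS0
    have haS0 : a ∉ S0 := fun h => ha (hS0 h)
    rw [card_insert_of_notMem haS0]
    have hk : S0.card ≤ A.card := card_le_card hS0
    set k := S0.card with hkdef
    have hb : s + k + 2 ≤ M := by omega
    set j := s + k with hjdef
    set t := M - j - 2 with htdef
    have e1 : M - s - k - 1 = t + 1 := by omega
    have e2 : M - s - (k+1) - 1 = t := by omega
    have e3 : s + (k+1) = j + 1 := by omega
    have e4 : M = j + t + 2 := by omega
    have e5 : M - 1 - s - k - 1 = t := by omega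
    have e6 : M - 1 = j + t + 1 := by omega
    rw [e1, e2, e3, e5, e6]
    rw [show M.factorial = (j+t+2).factorial by rw [← e4]]
    exact pascal_fact j t
end

section
/- Let M, g, s ∈ ℕ with 1 ≤ g ≤ M and s ≤ g − 1. Then (1/M) · ∑_{k=0}^{M−g} C(M−g, k) / C(M−1, s+k) = s! · (g − s − 1)! / g!, where C(n, k) denotes the binomial coefficient. -/
open Finset

lemma pt_aux (m j : ℕ) (hj : j ≤ m) :
    (1:ℝ)/((m+1).choose j : ℕ) + 1/((m+1).choose (j+1) : ℕ) =
      ((m:ℝ)+2)/((m:ℝ)+1) * (1/(m.choose j : ℕ)) := by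
  have hA : 0 < (m+1).choose j := Nat.choose_pos (by omega)
  have hB : 0 < (m+1).choose (j+1) := Nat.choose_pos (by omega)
  have hC : 0 < m.choose j := Nat.choose_pos hj
  have h1 : (m+1) * m.choose j = (m+1).choose (j+1) * (j+1) :=
    Nat.add_one_mul_choose_eq m j
  have h2 : (m+1).choose (j+1) * (j+1) = (m+1).choose j * (m+1-j) :=
    Nat.choose_succ_right_eq (m+1) j
  have h1' : ((m:ℝ)+1) * (m.choose j : ℕ) = ((m+1).choose (j+1) : ℕ) * ((j:ℝ)+1) := by
    exact_mod_cast congrArg (fun x : ℕ => (x : ℝ)) h1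
  have h2' : (((m+1).choose (j+1) : ℕ) : ℝ) * ((j:ℝ)+1)
      = ((m+1).choose j : ℕ) * ((m:ℝ)+1-j) := by
    have := congrArg (fun x : ℕ => (x : ℝ)) h2
    push_cast [Nat.cast_sub (by omega : j ≤ m+1)] at this
    linarith [this]
  have hA' : ((((m+1).choose j : ℕ)):ℝ) ≠ 0 := by positivity
  have hB' : ((((m+1).choose (j+1) : ℕ)):ℝ) ≠ 0 := by positivity
  have hC' : (((m.choose j : ℕ)):ℝ) ≠ 0 := by positivity
  have hm : ((m:ℝ)+1) ≠ 0 := by positivity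
  field_simp
  nlinarith [h1', h2', sq_nonneg ((((m+1).choose j : ℕ)):ℝ)]

lemma sum_aux (r s : ℕ) (hs : s ≤ r) : ∀ n : ℕ,
    ∑ k ∈ range (n+1), ((n.choose k : ℕ) : ℝ) / (((n+r).choose (s+k) : ℕ) : ℝ)
      = ((n:ℝ)+r+1) / (((r:ℝ)+1) * (r.choose s : ℕ)) := by
  intro n
  induction n with
  | zero =>
    have hC : (((r.choose s : ℕ)):ℝ) ≠ 0 := by
      have := Nat.choose_pos hs; positivity
    simp only [Finset.sum_range_one, Nat.choose_self, Nat.zero_add, Nat.add_zero, Nat.choose_zero_right]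
    push_cast
    field_simp
    ring
  | succ n ih =>
    have key : ∀ k ∈ range (n+1),
        ((n.choose k : ℕ) : ℝ) / (((n+1+r).choose (s+k) : ℕ) : ℝ)
          + ((n.choose k : ℕ) : ℝ) / (((n+1+r).choose (s+k+1) : ℕ) : ℝ)
        = ((n:ℝ)+r+2)/((n:ℝ)+r+1) * (((n.choose k : ℕ) : ℝ) / (((n+r).choose (s+k) : ℕ) : ℝ)) := by
      intro k hk
      have hk' : k ≤ n := by simpa using Nat.lt_succ_iff.mp (Finset.mem_range.mp hk)
      have h := pt_aux (n+r) (s+k) (by omega)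
      have e1 : n + r + 1 = n + 1 + r := by ring
      rw [e1] at h
      push_cast at h
      linear_combination ((n.choose k : ℕ) : ℝ) * h
    have step1 : ∑ k ∈ range (n+1+1), (((n+1).choose k : ℕ):ℝ) / (((n+1+r).choose (s+k) : ℕ):ℝ)
        = (∑ k ∈ range (n+1), ((n.choose k : ℕ):ℝ) / (((n+1+r).choose (s+k+1):ℕ):ℝ))
        + ∑ k ∈ range (n+1+1), ((n.choose k : ℕ):ℝ) / (((n+1+r).choose (s+k):ℕ):ℝ) := by
      rw [Finset.sum_range_succ' _ (n+1),
        Finset.sum_range_succ' (fun k => ((n.choose k : ℕ):ℝ) / (((n+1+r).choose (s+k):ℕ):ℝ)) (n+1)]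
      simp only [Nat.choose_succ_succ, Nat.cast_add, add_div, Finset.sum_add_distrib,
        Nat.choose_zero_right, Nat.add_zero]
      simp only [show ∀ x, s + (x+1) = s + x + 1 from fun x => (Nat.add_assoc s x 1).symm]
      push_cast
      ring
    have step2 : ∑ k ∈ range (n+1+1), ((n.choose k : ℕ):ℝ) / (((n+1+r).choose (s+k):ℕ):ℝ)
        = ∑ k ∈ range (n+1), ((n.choose k : ℕ):ℝ) / (((n+1+r).choose (s+k):ℕ):ℝ) := by
      rw [Finset.sum_range_succ]
      simp
    have hC : (((r.choose s : ℕ)):ℝ) ≠ 0 := by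
      have := Nat.choose_pos hs; positivity
    have hnr : ((n:ℝ)+r+1) ≠ 0 := by positivity
    have hr1 : ((r:ℝ)+1) ≠ 0 := by positivity
    calc ∑ k ∈ range (n+1+1), (((n+1).choose k : ℕ):ℝ) / (((n+1+r).choose (s+k) : ℕ):ℝ)
        = ∑ k ∈ range (n+1), (((n.choose k : ℕ):ℝ) / (((n+1+r).choose (s+k):ℕ):ℝ)
            + ((n.choose k : ℕ):ℝ) / (((n+1+r).choose (s+k+1):ℕ):ℝ)) := by
          rw [step1, step2, Finset.sum_add_distrib]; ring
      _ = ∑ k ∈ range (n+1), ((n:ℝ)+r+2)/((n:ℝ)+r+1) * (((n.choose k : ℕ) : ℝ) / (((n+r).choose (s+k) : ℕ) : ℝ)) :=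
          Finset.sum_congr rfl key
      _ = ((n:ℝ)+r+2)/((n:ℝ)+r+1) * ∑ k ∈ range (n+1), ((n.choose k : ℕ) : ℝ) / (((n+r).choose (s+k) : ℕ) : ℝ) := by
          rw [Finset.mul_sum]
      _ = (((n:ℕ):ℝ)+1+r+1) / (((r:ℝ)+1) * (r.choose s : ℕ)) := by
          rw [ih]; field_simp; ring
      _ = (((n+1:ℕ):ℝ)+r+1) / (((r:ℝ)+1) * (r.choose s : ℕ)) := by push_cast; ring


/-- Identity of sums of ratios of binomial coefficients: for `1 ≤ g ≤ M` and `s ≤ g - 1`,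
`(1/M) ∑_{k=0}^{M-g} C(M-g,k)/C(M-1,s+k) = s!(g-s-1)!/g!`. -/
theorem binomial_ratio_sum_identity
    (M g s : ℕ) (hg1 : 1 ≤ g) (hgM : g ≤ M) (hs : s ≤ g - 1) :
    (1 / (M : ℝ)) * ∑ k ∈ Finset.range (M - g + 1),
        (((M - g).choose k : ℕ) : ℝ) / (((M - 1).choose (s + k) : ℕ) : ℝ) =
      ((s.factorial * (g - s - 1).factorial : ℕ) : ℝ) / (g.factorial : ℕ) := by
  have h := sum_aux (g-1) s hs (M-g)
  have e1 : M - g + (g-1) = M - 1 := by omega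
  rw [e1] at h
  rw [h]
  have hM : 0 < M := by omega
  have hMr : (M:ℝ) ≠ 0 := by positivity
  have hCpos : 0 < (g-1).choose s := Nat.choose_pos hs
  have hC : (((g-1).choose s : ℕ):ℝ) ≠ 0 := by positivity
  have hfact : (g-1).choose s * s.factorial * (g-1-s).factorial = (g-1).factorial :=
    Nat.choose_mul_factorial_mul_factorial hs
  have hgfact : g.factorial = g * (g-1).factorial := by
    conv_lhs => rw [show g = (g-1)+1 by omega]
    rw [Nat.factorial_succ]
    congr 1
    omega
  have e2 : g - s - 1 = g - 1 - s := by omega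
  rw [e2, hgfact]
  have hfr : (((g-1).choose s : ℕ):ℝ) * (s.factorial : ℕ) * ((g-1-s).factorial : ℕ)
      = ((g-1).factorial : ℕ) := by exact_mod_cast congrArg (fun x : ℕ => (x:ℝ)) hfact
  have e3 : (((M-g:ℕ)):ℝ) + ((g-1:ℕ):ℝ) + 1 = (M:ℝ) := by
    push_cast [Nat.cast_sub hgM, Nat.cast_sub hg1]
    ring
  have e4 : (((g-1:ℕ)):ℝ) + 1 = (g:ℝ) := by
    push_cast [Nat.cast_sub hg1]; ring
  rw [e3, e4]
  have hfpos : ((g-1).factorial : ℝ) ≠ 0 := by positivity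
  have hgr : (g:ℝ) ≠ 0 := by positivity
  push_cast
  field_simp
  nlinarith [hfr, hMr, mul_pos (Nat.cast_pos.mpr hCpos : (0:ℝ) < (g-1).choose s) (by positivity : (0:ℝ) < (M:ℝ))]
end

section
/- Let M ∈ ℕ, let 𝒢 = (G_1, …, G_G) be a partition of Fin M into G ≥ 1 nonempty pairwise disjoint groups whose union is Fin M, and let v : Finset (Fin M) → ℝ be any set function. Then the groupShapley values satisfy the efficiency property: ∑_{i=1}^G φ_{G_i} = v(univ) − v(∅), where univ is the full feature set Fin M. -/
open Finset

/-- The groupShapley value of group `G i` for contribution function `v` and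
partition `G` of the features into `Gn` groups. -/
noncomputable def groupShapley {M Gn : ℕ} (G : Fin Gn → Finset (Fin M))
    (v : Finset (Fin M) → ℝ) (i : Fin Gn) : ℝ :=
  ∑ T ∈ (Finset.univ.erase i).powerset,
    ((T.card.factorial * (Gn - T.card - 1).factorial : ℕ) : ℝ) / (Gn.factorial : ℕ) *
      (v (T.biUnion G ∪ G i) - v (T.biUnion G))

/-- Efficiency property of groupShapley values: they sum to `v univ - v ∅`. -/
theorem groupShapley_efficiency
    (M Gn : ℕ) (hGn : 1 ≤ Gn) (G : Fin Gn → Finset (Fin M))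
    (hne : ∀ i, (G i).Nonempty)
    (hdisj : ∀ i j : Fin Gn, i ≠ j → Disjoint (G i) (G j))
    (hcover : Finset.univ.biUnion G = (Finset.univ : Finset (Fin M)))
    (v : Finset (Fin M) → ℝ) :
    ∑ i : Fin Gn, groupShapley G v i = v Finset.univ - v ∅ := by
  classical
  set w : Finset (Fin Gn) → ℝ := fun S => v (S.biUnion G) with hw
  set c : ℕ → ℝ := fun k =>
    ((k.factorial * (Gn - k - 1).factorial : ℕ) : ℝ) / (Gn.factorial : ℕ) with hc
  have step1 : ∀ i : Fin Gn, groupShapley G v i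
      = ∑ T ∈ (Finset.univ.erase i).powerset, c T.card * (w (insert i T) - w T) := by
    intro i
    unfold groupShapley
    refine Finset.sum_congr rfl fun T hT => ?_
    have hiT : i ∉ T := fun h =>
      (Finset.mem_erase.mp ((Finset.mem_powerset.mp hT) h)).1 rfl
    have : (insert i T).biUnion G = T.biUnion G ∪ G i := by
      rw [Finset.biUnion_insert, Finset.union_comm]
    simp [hw, hc, this]
  -- positive part, reindexed
  have hpos : ∀ i : Fin Gn,
      ∑ T ∈ (Finset.univ.erase i).powerset, c T.card * w (insert i T)
      = ∑ S ∈ Finset.univ.powerset, (if i ∈ S then c (S.card - 1) * w S else 0) := by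
    intro i
    rw [← Finset.sum_filter]
    refine Finset.sum_nbij' (fun T => insert i T) (fun S => S.erase i) ?_ ?_ ?_ ?_ ?_
    · intro T hT
      simp only [Finset.mem_powerset] at hT
      simp [Finset.mem_filter]
    · intro S hS
      simp only [Finset.mem_filter, Finset.mem_powerset] at hS
      exact Finset.mem_powerset.mpr (Finset.erase_subset_erase i hS.1)
    · intro T hT
      have hiT : i ∉ T := fun h =>
        (Finset.mem_erase.mp ((Finset.mem_powerset.mp hT) h)).1 rfl
      exact Finset.erase_insert hiT
    · intro S hS
      simp only [Finset.mem_filter] at hS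
      exact Finset.insert_erase hS.2
    · intro T hT
      have hiT : i ∉ T := fun h =>
        (Finset.mem_erase.mp ((Finset.mem_powerset.mp hT) h)).1 rfl
      rw [Finset.card_insert_of_notMem hiT]
      simp
  -- negative part, reindexed
  have hneg : ∀ i : Fin Gn,
      ∑ T ∈ (Finset.univ.erase i).powerset, c T.card * w T
      = ∑ S ∈ Finset.univ.powerset, (if i ∉ S then c S.card * w S else 0) := by
    intro i
    rw [← Finset.sum_filter]
    apply Finset.sum_congr _ (fun _ _ => rfl)
    ext S
    simp [Finset.subset_erase]
  have Psum : ∑ i : Fin Gn, ∑ S ∈ Finset.univ.powerset,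
        (if i ∈ S then c (S.card - 1) * w S else 0)
      = ∑ S ∈ Finset.univ.powerset, (S.card : ℝ) * (c (S.card - 1) * w S) := by
    rw [Finset.sum_comm]
    refine Finset.sum_congr rfl fun S _ => ?_
    rw [Finset.sum_ite_mem, Finset.univ_inter, Finset.sum_const, nsmul_eq_mul]
  have Nsum : ∑ i : Fin Gn, ∑ S ∈ Finset.univ.powerset,
        (if i ∉ S then c S.card * w S else 0)
      = ∑ S ∈ Finset.univ.powerset, ((Gn - S.card : ℕ) : ℝ) * (c S.card * w S) := by
    rw [Finset.sum_comm]
    refine Finset.sum_congr rfl fun S _ => ?_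
    have : ∀ i : Fin Gn, (if i ∉ S then c S.card * w S else 0)
        = (if i ∈ Sᶜ then c S.card * w S else 0) := by
      intro i; simp [Finset.mem_compl]
    simp_rw [this]
    rw [Finset.sum_ite_mem, Finset.univ_inter, Finset.sum_const, nsmul_eq_mul,
      Finset.card_compl, Fintype.card_fin]
  have coeff : ∀ S : Finset (Fin Gn),
      (S.card : ℝ) * c (S.card - 1) - ((Gn - S.card : ℕ) : ℝ) * c S.card
      = (if S = Finset.univ then 1 else 0) - (if S = (∅ : Finset (Fin Gn)) then 1 else 0) := by
    intro S
    have hsle : S.card ≤ Gn := by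
      have := Finset.card_le_card (Finset.subset_univ S)
      simpa [Fintype.card_fin] using this
    have hGn0 : 0 < Gn := hGn
    have hfac : (0:ℝ) < (Gn.factorial : ℕ) := by exact_mod_cast Nat.factorial_pos Gn
    rcases Nat.eq_zero_or_pos S.card with h0 | hpos'
    · have hSempty : S = ∅ := Finset.card_eq_zero.mp h0
      have hSnu : S ≠ Finset.univ := by
        intro h
        rw [h] at h0
        simp [Fintype.card_fin] at h0
        omega
      rw [if_neg hSnu, if_pos hSempty, h0]
      have hmul : (Gn : ℝ) * ((Gn - 1).factorial : ℕ) = (Gn.factorial : ℕ) := by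
        exact_mod_cast Nat.mul_factorial_pred hGn0.ne'
      simp only [hc]
      push_cast
      rw [Nat.factorial_zero]
      field_simp
      push_cast at hmul ⊢
      simp only [Nat.sub_zero]
      linarith [hmul]
    · rcases eq_or_lt_of_le hsle with heq | hlt
      · have hSu : S = Finset.univ := by
          apply Finset.eq_univ_of_card
          simp [Fintype.card_fin, heq]
        have hSne : S ≠ ∅ := by
          intro h; rw [h] at hpos'; simp at hpos'
        rw [if_pos hSu, if_neg hSne, heq]
        have h1 : Gn - (Gn - 1) - 1 = 0 := by omega
        have h2 : Gn - Gn = 0 := by omega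
        have hmul : (Gn : ℝ) * ((Gn - 1).factorial : ℕ) = (Gn.factorial : ℕ) := by
          exact_mod_cast Nat.mul_factorial_pred hGn0.ne'
        simp only [hc, h1, h2]
        push_cast
        rw [Nat.factorial_zero]
        field_simp
        push_cast at hmul ⊢
        linarith [hmul]
      · -- 0 < card < Gn
        have hSnu : S ≠ Finset.univ := by
          intro h; rw [h] at hlt; simp [Fintype.card_fin] at hlt
        have hSne : S ≠ ∅ := by
          intro h; rw [h] at hpos'; simp at hpos'
        rw [if_neg hSnu, if_neg hSne]
        have h1 : Gn - (S.card - 1) - 1 = Gn - S.card := by omega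
        have hmul1 : (S.card : ℝ) * ((S.card - 1).factorial : ℕ) = (S.card.factorial : ℕ) := by
          exact_mod_cast Nat.mul_factorial_pred hpos'.ne'
        have hmul2 : ((Gn - S.card : ℕ) : ℝ) * ((Gn - S.card - 1).factorial : ℕ)
            = ((Gn - S.card).factorial : ℕ) := by
          exact_mod_cast Nat.mul_factorial_pred (by omega : Gn - S.card ≠ 0)
        rw [Nat.cast_sub hsle] at hmul2
        simp only [hc, h1]
        push_cast
        push_cast at hmul1 hmul2
        field_simp
        rw [Nat.cast_sub hsle]
        linear_combination (((Gn - S.card).factorial : ℕ) : ℝ) * hmul1 - ((S.card.factorial : ℕ) : ℝ) * hmul2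
  -- assemble
  calc ∑ i : Fin Gn, groupShapley G v i
      = ∑ i : Fin Gn, ∑ T ∈ (Finset.univ.erase i).powerset,
          c T.card * (w (insert i T) - w T) := by
        exact Finset.sum_congr rfl fun i _ => step1 i
    _ = (∑ i : Fin Gn, ∑ T ∈ (Finset.univ.erase i).powerset, c T.card * w (insert i T))
        - ∑ i : Fin Gn, ∑ T ∈ (Finset.univ.erase i).powerset, c T.card * w T := by
        rw [← Finset.sum_sub_distrib]
        refine Finset.sum_congr rfl fun i _ => ?_
        rw [← Finset.sum_sub_distrib]
        exact Finset.sum_congr rfl fun T _ => by ring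
    _ = (∑ S ∈ Finset.univ.powerset, (S.card : ℝ) * (c (S.card - 1) * w S))
        - ∑ S ∈ Finset.univ.powerset, ((Gn - S.card : ℕ) : ℝ) * (c S.card * w S) := by
        rw [← Psum, ← Nsum]
        congr 1
        · exact Finset.sum_congr rfl fun i _ => hpos i
        · exact Finset.sum_congr rfl fun i _ => hneg i
    _ = ∑ S ∈ Finset.univ.powerset,
          ((if S = Finset.univ then (1:ℝ) else 0) - (if S = ∅ then 1 else 0)) * w S := by
        rw [← Finset.sum_sub_distrib]
        refine Finset.sum_congr rfl fun S _ => ?_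
        rw [← coeff S]
        ring
    _ = (∑ S ∈ Finset.univ.powerset, (if S = Finset.univ then w S else 0))
        - ∑ S ∈ Finset.univ.powerset, (if S = ∅ then w S else 0) := by
        have hune : (Finset.univ : Finset (Fin Gn)) ≠ ∅ := by
          have : Nonempty (Fin Gn) := ⟨⟨0, hGn⟩⟩
          simpa using Finset.univ_nonempty.ne_empty
        rw [← Finset.sum_sub_distrib]
        refine Finset.sum_congr rfl fun S _ => ?_
        by_cases h1 : S = Finset.univ
        · simp [h1, hune]
        · by_cases h2 : S = ∅ <;> simp [h1, h2, Ne.symm hune]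
    _ = w Finset.univ - w ∅ := by
        rw [Finset.sum_ite_eq' Finset.univ.powerset, Finset.sum_ite_eq' Finset.univ.powerset,
          if_pos (Finset.mem_powerset_self _), if_pos (Finset.empty_mem_powerset _)]
    _ = v Finset.univ - v ∅ := by
        simp [hw, hcover]
end

section
/- Let M ∈ ℕ, let 𝒢 = (G_1, …, G_G) be a partition of Fin M into G nonempty pairwise disjoint groups whose union is Fin M, and let v : Finset (Fin M) → ℝ be a set function. Suppose two groups G_i and G_j (i ≠ j) contribute symmetrically, i.e., v((⋃_{k∈𝒯} G_k) ∪ G_i) = v((⋃_{k∈𝒯} G_k) ∪ G_j) for every sub-collection 𝒯 ⊆ {1,…,G} \ {i, j}. Then their groupShapley values are equal: φ_{G_i} = φ_{G_j}. (Symmetry property of groupShapley.) -/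
open Finset

/-- Symmetry property of groupShapley: two groups that contribute symmetrically
have equal groupShapley values. -/
theorem groupShapley_symmetry
    (M Gn : ℕ) (G : Fin Gn → Finset (Fin M))
    (hne : ∀ i, (G i).Nonempty)
    (hdisj : ∀ i j : Fin Gn, i ≠ j → Disjoint (G i) (G j))
    (hcover : Finset.univ.biUnion G = (Finset.univ : Finset (Fin M)))
    (v : Finset (Fin M) → ℝ) (i j : Fin Gn) (hij : i ≠ j)
    (hsym : ∀ T : Finset (Fin Gn), T ⊆ (Finset.univ.erase i).erase j →
      v (T.biUnion G ∪ G i) = v (T.biUnion G ∪ G j)) :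
    groupShapley G v i = groupShapley G v j := by
  classical
  set D : Finset (Fin Gn) := (Finset.univ.erase i).erase j with hD
  have hjD : j ∉ D := Finset.notMem_erase _ _
  have hiD : i ∉ D := by
    simp [hD, Finset.mem_erase, hij]
  have hEi : (Finset.univ.erase i) = insert j D := by
    rw [hD, Finset.insert_erase]
    exact Finset.mem_erase.mpr ⟨Ne.symm hij, Finset.mem_univ j⟩
  have hEj : (Finset.univ.erase j) = insert i D := by
    rw [hD, Finset.erase_right_comm, Finset.insert_erase]
    exact Finset.mem_erase.mpr ⟨hij, Finset.mem_univ i⟩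
  unfold groupShapley
  rw [hEi, hEj, Finset.sum_powerset_insert hjD, Finset.sum_powerset_insert hiD]
  congr 1
  · -- sums over S ⊆ D, using hsym directly
    refine Finset.sum_congr rfl fun S hS => ?_
    have hSD : S ⊆ D := Finset.mem_powerset.mp hS
    rw [hsym S hSD]
  · refine Finset.sum_congr rfl fun S hS => ?_
    have hSD : S ⊆ D := Finset.mem_powerset.mp hS
    have hjS : j ∉ S := fun h => hjD (hSD h)
    have hiS : i ∉ S := fun h => hiD (hSD h)
    have hc1 : (insert j S).card = S.card + 1 := Finset.card_insert_of_notMem hjS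
    have hc2 : (insert i S).card = S.card + 1 := Finset.card_insert_of_notMem hiS
    rw [hc1, hc2]
    congr 1
    rw [Finset.biUnion_insert, Finset.biUnion_insert]
    have h1 : G j ∪ S.biUnion G ∪ G i = G i ∪ S.biUnion G ∪ G j := by
      rw [Finset.union_right_comm, Finset.union_right_comm (G i)]
      ac_rfl
    have h2 : G j ∪ S.biUnion G = S.biUnion G ∪ G j := Finset.union_comm _ _
    have h3 : G i ∪ S.biUnion G = S.biUnion G ∪ G i := Finset.union_comm _ _
    rw [h1, h2, h3, hsym S hSD]
end

section
/- Let M ∈ ℕ, let 𝒢 = (G_1, …, G_G) be a partition of Fin M into G nonempty pairwise disjoint groups whose union is Fin M, and let v : Finset (Fin M) → ℝ be separable over 𝒢 with component functions w_1, …, w_G. If some group is a singleton, G_i = {j}, then the feature-wise Shapley value of j is φ_j(v) = w_i({j}) − w_i(∅). (Special case of Theorem 2.1: a feature that is independent of all other features and enters the model purely additively has Shapley value f_j(x*_j) − E[f_j(x_j)].) -/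
open Finset

lemma shapley_coeff_sum (M : ℕ) (j : Fin M) :
    ∑ S ∈ (Finset.univ.erase j).powerset,
      ((S.card.factorial * (M - S.card - 1).factorial : ℕ) : ℝ) / (M.factorial : ℕ) = 1 := by
  obtain ⟨n, hMn⟩ : ∃ n, M = n + 1 := ⟨M - 1, (Nat.succ_pred_eq_of_pos j.pos).symm⟩
  subst hMn
  have hcard : (Finset.univ.erase j).card = n := by
    simp [Finset.card_erase_of_mem, Fintype.card_fin]
  have hrw := Finset.sum_powerset_apply_card
    (f := fun m : ℕ => ((m.factorial * (n + 1 - m - 1).factorial : ℕ) : ℝ) /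
      ((n+1).factorial : ℕ)) (x := Finset.univ.erase j)
  rw [hrw, hcard]
  have : ∀ m ∈ Finset.range (n + 1),
      n.choose m • (((m.factorial * (n + 1 - m - 1).factorial : ℕ) : ℝ) / ((n+1).factorial : ℕ))
      = ((n+1 : ℕ) : ℝ)⁻¹ := by
    intro m hm
    have hmn : m ≤ n := Nat.lt_succ_iff.mp (Finset.mem_range.mp hm)
    have h1 : n + 1 - m - 1 = n - m := by omega
    have h2 : n.choose m * (m.factorial * (n - m).factorial) = n.factorial := by
      rw [← Nat.choose_mul_factorial_mul_factorial hmn]; ring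
    rw [h1, nsmul_eq_mul, ← mul_div_assoc, ← Nat.cast_mul, h2, Nat.factorial_succ]
    have hfac : (0 : ℝ) < n.factorial := by positivity
    push_cast
    rw [mul_comm, div_mul_eq_div_div, div_self (ne_of_gt hfac), one_div]
  rw [Finset.sum_congr rfl this, Finset.sum_const, Finset.card_range, nsmul_eq_mul]
  rw [mul_inv_cancel₀ (by positivity)]

/-- Special case of Theorem 2.1: if `v` is separable over the partition `G` with component
functions `w` and some group is a singleton `G i = {j}`, then the feature-wise Shapley
value of `j` is `w i {j} - w i ∅`. -/
theorem shapley_singleton_group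
    (M Gn : ℕ) (G : Fin Gn → Finset (Fin M))
    (hne : ∀ i, (G i).Nonempty)
    (hdisj : ∀ i j : Fin Gn, i ≠ j → Disjoint (G i) (G j))
    (hcover : Finset.univ.biUnion G = (Finset.univ : Finset (Fin M)))
    (v : Finset (Fin M) → ℝ) (w : Fin Gn → Finset (Fin M) → ℝ)
    (hsep : ∀ S : Finset (Fin M), v S = ∑ i, w i (S ∩ G i))
    (i : Fin Gn) (j : Fin M) (hsingle : G i = {j}) :
    shapley v j = w i {j} - w i ∅ := by
  have hjGi : j ∈ G i := by rw [hsingle]; exact Finset.mem_singleton_self j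
  have hC : ∀ S ∈ (Finset.univ.erase j).powerset,
      v (insert j S) - v S = w i {j} - w i ∅ := by
    intro S hS
    have hjS : j ∉ S := fun h =>
      (Finset.mem_erase.mp (Finset.mem_powerset.mp hS h)).1 rfl
    rw [hsep, hsep, ← Finset.sum_sub_distrib]
    rw [Finset.sum_eq_single_of_mem i (Finset.mem_univ i) (fun k _ hk => by
      have hjk : j ∉ G k := fun h =>
        Finset.disjoint_left.mp (hdisj i k (Ne.symm hk)) hjGi h
      rw [Finset.insert_inter_of_notMem hjk, sub_self])]
    rw [hsingle, Finset.inter_singleton_of_mem (Finset.mem_insert_self j S),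
      Finset.inter_singleton_of_notMem hjS]
  unfold shapley
  rw [Finset.sum_congr rfl fun S hS => by rw [hC S hS]]
  rw [← Finset.sum_mul, shapley_coeff_sum, one_mul]
end

section
/- Let (Ω, ℱ, μ) be a probability space, M ∈ ℕ, and X_j : Ω → ℝ measurable for j ∈ Fin M. Let 𝒢 = (G_1, …, G_G) be a partition of Fin M and suppose the family of random vectors ((X_j)_{j ∈ G_1}, …, (X_j)_{j ∈ G_G}) is mutually independent (group independence, Condition 2). For each i let f_i be a measurable real-valued function of the coordinates (X_j)_{j ∈ G_i} such that f_i((X_j)_{j ∈ G_i}) is integrable, so that f = ∑_{i=1}^G f_i is partially additively separable over 𝒢 (Condition 1). Then for every subset S ⊆ Fin M, μ-almost everywhere, E[ ∑_{i=1}^G f_i((X_j)_{j ∈ G_i}) | σ((X_j)_{j ∈ S}) ] = ∑_{i=1}^G E[ f_i((X_j)_{j ∈ G_i}) | σ((X_j)_{j ∈ S ∩ G_i}) ]; in particular, for groups i with S ∩ G_i = ∅ the i-th term equals the unconditional expectation E[f_i((X_j)_{j ∈ G_i})]. -/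
open MeasureTheory ProbabilityTheory Finset



lemma sup_eq_generateFrom_inter {Ω : Type*} (m₁ m₂ : MeasurableSpace Ω) :
    m₁ ⊔ m₂ = MeasurableSpace.generateFrom
      {s | ∃ s₁ s₂, MeasurableSet[m₁] s₁ ∧ MeasurableSet[m₂] s₂ ∧ s = s₁ ∩ s₂} := by
  refine le_antisymm (sup_le ?_ ?_) (MeasurableSpace.generateFrom_le ?_)
  · intro s hs
    exact MeasurableSpace.measurableSet_generateFrom ⟨s, Set.univ, hs, MeasurableSet.univ,
      (Set.inter_univ s).symm⟩
  · intro s hs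
    exact MeasurableSpace.measurableSet_generateFrom ⟨Set.univ, s, MeasurableSet.univ, hs,
      (Set.univ_inter s).symm⟩
  · rintro t ⟨s₁, s₂, hs₁, hs₂, rfl⟩
    exact ((le_sup_left : m₁ ≤ m₁ ⊔ m₂) _ hs₁).inter ((le_sup_right : m₂ ≤ m₁ ⊔ m₂) _ hs₂)

lemma isPiSystem_inter_sets {Ω : Type*} (m₁ m₂ : MeasurableSpace Ω) :
    IsPiSystem {s | ∃ s₁ s₂, MeasurableSet[m₁] s₁ ∧ MeasurableSet[m₂] s₂ ∧ s = s₁ ∩ s₂} := by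
  rintro s ⟨s₁, s₂, hs₁, hs₂, rfl⟩ t ⟨t₁, t₂, ht₁, ht₂, rfl⟩ -
  exact ⟨s₁ ∩ t₁, s₂ ∩ t₂, hs₁.inter ht₁, hs₂.inter ht₂, by
    rw [Set.inter_inter_inter_comm]⟩

lemma condexp_sup_indep_aux {Ω : Type*} {m₀ m₁ m₂ mΩ : MeasurableSpace Ω}
    {μ : Measure Ω} [IsProbabilityMeasure μ]
    (hle₀ : m₀ ≤ mΩ) (hle₁ : m₁ ≤ mΩ) (hle₂ : m₂ ≤ mΩ) {f : Ω → ℝ}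
    (hf : StronglyMeasurable[m₀] f) (hfint : Integrable f μ)
    (hm₁₀ : m₁ ≤ m₀) (hindep : Indep m₀ m₂ μ) :
    μ[f | m₁ ⊔ m₂] =ᵐ[μ] μ[f | m₁] := by
  have hle : m₁ ⊔ m₂ ≤ mΩ := sup_le hle₁ hle₂
  -- key: integrating an m₀-measurable integrable function over an m₂-set factorizes
  have key : ∀ (h : Ω → ℝ), StronglyMeasurable[m₀] h → Integrable h μ →
      ∀ s₂, MeasurableSet[m₂] s₂ →
      ∫ x in s₂, h x ∂μ = (μ s₂).toReal * ∫ x, h x ∂μ := by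
    intro h hmeas hint s₂ hs₂
    have h1 : μ[h | m₂] =ᵐ[μ] fun _ => ∫ x, h x ∂μ :=
      condExp_indep_eq hle₀ hle₂ hmeas hindep
    calc ∫ x in s₂, h x ∂μ = ∫ x in s₂, (μ[h | m₂]) x ∂μ :=
            (setIntegral_condExp hle₂ hint hs₂).symm
      _ = ∫ x in s₂, (fun _ => ∫ x, h x ∂μ) x ∂μ :=
            setIntegral_congr_ae (hle₂ _ hs₂) (h1.mono fun x hx _ => hx)
      _ = (μ s₂).toReal * ∫ x, h x ∂μ := by
            rw [setIntegral_const, smul_eq_mul, measureReal_def]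
  set g := μ[f | m₁] with hg
  have hgint : Integrable g μ := integrable_condExp
  refine (ae_eq_condExp_of_forall_setIntegral_eq hle hfint
    (fun s _ _ => hgint.integrableOn) (fun s hs _ => ?_)
    (StronglyMeasurable.aestronglyMeasurable (stronglyMeasurable_condExp.mono le_sup_left))).symm
  revert hs
  have hgen := sup_eq_generateFrom_inter m₁ m₂
  have hpi := isPiSystem_inter_sets m₁ m₂
  refine fun hs => MeasurableSpace.induction_on_inter
    (C := fun t _ => ∫ x in t, g x ∂μ = ∫ x in t, f x ∂μ) hgen hpi ?_ ?_ ?_ ?_ s hs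
  · simp
  · rintro t ⟨s₁, s₂, hs₁, hs₂, rfl⟩
    have hs₁' : MeasurableSet[mΩ] s₁ := hle₁ _ hs₁
    have hfind : StronglyMeasurable[m₀] (s₁.indicator f) := hf.indicator (hm₁₀ _ hs₁)
    have hgind : StronglyMeasurable[m₀] (s₁.indicator g) :=
      (stronglyMeasurable_condExp.mono hm₁₀).indicator (hm₁₀ _ hs₁)
    have h1 : ∫ x in s₁ ∩ s₂, f x ∂μ = (μ s₂).toReal * ∫ x in s₁, f x ∂μ := by
      rw [Set.inter_comm, ← setIntegral_indicator hs₁',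
        key _ hfind (hfint.indicator hs₁') s₂ hs₂, integral_indicator hs₁']
    have h2 : ∫ x in s₁ ∩ s₂, g x ∂μ = (μ s₂).toReal * ∫ x in s₁, g x ∂μ := by
      rw [Set.inter_comm, ← setIntegral_indicator hs₁',
        key _ hgind (hgint.indicator hs₁') s₂ hs₂, integral_indicator hs₁']
    rw [h1, h2, hg, setIntegral_condExp hle₁ hfint hs₁]
  · intro t htm ht
    have htm' : MeasurableSet[mΩ] t := hle _ htm
    have hf' := integral_add_compl htm' hfint
    have hg' := integral_add_compl htm' hgint
    have hint : ∫ x, g x ∂μ = ∫ x, f x ∂μ := integral_condExp hle₁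
    linarith
  · intro t hd htm ht
    have htm' : ∀ i, MeasurableSet[mΩ] (t i) := fun i => hle _ (htm i)
    rw [integral_iUnion htm' hd hfint.integrableOn,
      integral_iUnion htm' hd hgint.integrableOn]
    exact tsum_congr ht


section Aux

lemma comap_pi_finset {Ω : Type*} {M : ℕ} (X : Fin M → Ω → ℝ) (T : Finset (Fin M)) :
    MeasurableSpace.comap (fun (ω : Ω) (j : ↥T) => X j ω)
      (inferInstance : MeasurableSpace (↥T → ℝ)) =
    ⨆ j ∈ T, MeasurableSpace.comap (X j) inferInstance := by
  have h1 : (inferInstance : MeasurableSpace (↥T → ℝ)) =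
      ⨆ j : ↥T, MeasurableSpace.comap (fun b => b j) inferInstance := rfl
  rw [h1, MeasurableSpace.comap_iSup]
  simp_rw [MeasurableSpace.comap_comp]
  rw [iSup_subtype']
  rfl

end Aux



/-- Decomposition of the conditional expectation of a partially additively separable model
under group independence (equation (simple-vs) in the paper): for every subset `S` of the
features, almost everywhere,
`E[∑ i, f i (X_{G i}) | σ(X_S)] = ∑ i, E[f i (X_{G i}) | σ(X_{S ∩ G i})]`,
and in particular, for groups with `S ∩ G i = ∅` the `i`-th term is the unconditional
expectation `E[f i (X_{G i})]`. -/
theorem condexp_partially_additively_separable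
    {Ω : Type*} [MeasurableSpace Ω] (μ : Measure Ω) [IsProbabilityMeasure μ]
    (M Gn : ℕ) (X : Fin M → Ω → ℝ) (hX : ∀ j, Measurable (X j))
    (G : Fin Gn → Finset (Fin M))
    (hne : ∀ i, (G i).Nonempty)
    (hdisj : ∀ i j : Fin Gn, i ≠ j → Disjoint (G i) (G j))
    (hcover : Finset.univ.biUnion G = (Finset.univ : Finset (Fin M)))
    (hindep : iIndepFun (m := fun i : Fin Gn => (inferInstance : MeasurableSpace (↥(G i) → ℝ)))
      (fun (i : Fin Gn) (ω : Ω) (j : ↥(G i)) => X j ω) μ)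
    (f : (i : Fin Gn) → ((↥(G i)) → ℝ) → ℝ)
    (hfmeas : ∀ i, Measurable (f i))
    (hfint : ∀ i, Integrable (fun ω => f i (fun j : ↥(G i) => X j ω)) μ)
    (S : Finset (Fin M)) :
    (μ[fun ω => ∑ i : Fin Gn, f i (fun j : ↥(G i) => X j ω) |
        MeasurableSpace.comap (fun (ω : Ω) (j : ↥S) => X j ω) inferInstance]
      =ᵐ[μ]
      fun ω => ∑ i : Fin Gn,
        (μ[fun ω' => f i (fun j : ↥(G i) => X j ω') |
          MeasurableSpace.comap (fun (ω' : Ω) (j : ↥(S ∩ G i)) => X j ω') inferInstance]) ω)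
    ∧
    ∀ i : Fin Gn, S ∩ G i = ∅ →
      (μ[fun ω' => f i (fun j : ↥(G i) => X j ω') |
          MeasurableSpace.comap (fun (ω' : Ω) (j : ↥(S ∩ G i)) => X j ω') inferInstance]
        =ᵐ[μ] fun _ => ∫ ω', f i (fun j : ↥(G i) => X j ω') ∂μ) := by
  classical
  have hmeasT : ∀ T : Finset (Fin M), Measurable (fun (ω : Ω) (j : ↥T) => X j ω) :=
    fun T => measurable_pi_lambda _ fun j => hX j
  have hleT : ∀ T : Finset (Fin M),
      MeasurableSpace.comap (fun (ω : Ω) (j : ↥T) => X j ω) inferInstance ≤ ‹MeasurableSpace Ω› :=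
    fun T => (hmeasT T).comap_le
  have hsub : ∀ {T T' : Finset (Fin M)}, T ⊆ T' →
      MeasurableSpace.comap (fun (ω : Ω) (j : ↥T) => X j ω) inferInstance ≤
      MeasurableSpace.comap (fun (ω : Ω) (j : ↥T') => X j ω) inferInstance := by
    intro T T' h
    rw [comap_pi_finset, comap_pi_finset]
    exact biSup_mono fun j hj => h hj
  -- splitting of the σ-algebra generated by X_S
  have hsplit : ∀ i : Fin Gn,
      MeasurableSpace.comap (fun (ω : Ω) (j : ↥S) => X j ω) inferInstance =
      MeasurableSpace.comap (fun (ω : Ω) (j : ↥(S ∩ G i)) => X j ω) inferInstance ⊔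
      MeasurableSpace.comap (fun (ω : Ω) (j : ↥(S \ G i)) => X j ω) inferInstance := by
    intro i
    rw [comap_pi_finset, comap_pi_finset, comap_pi_finset]
    have hS : S = (S ∩ G i) ∪ (S \ G i) := by
      ext j; simp only [Finset.mem_union, Finset.mem_inter, Finset.mem_sdiff]; tauto
    conv_lhs => rw [hS]
    exact Finset.iSup_union
  -- independence
  have hindep' : ∀ i : Fin Gn,
      Indep (MeasurableSpace.comap (fun (ω : Ω) (j : ↥(G i)) => X j ω) inferInstance)
        (MeasurableSpace.comap (fun (ω : Ω) (j : ↥(S \ G i)) => X j ω) inferInstance) μ := by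
    intro i
    have h := indep_biSup_compl (fun k => hleT (G k)) hindep ({i} : Set (Fin Gn))
    refine indep_of_indep_of_le_right (indep_of_indep_of_le_left h ?_) ?_
    · exact le_iSup₂ (f := fun k (_ : k ∈ ({i} : Set (Fin Gn))) =>
        MeasurableSpace.comap (fun (ω : Ω) (j : ↥(G k)) => X j ω) inferInstance) i rfl
    · rw [comap_pi_finset]
      refine iSup₂_le fun j hj => ?_
      obtain ⟨k, -, hk⟩ := Finset.mem_biUnion.mp
        (hcover ▸ Finset.mem_univ j : j ∈ Finset.univ.biUnion G)
      have hki : k ∈ ({i} : Set (Fin Gn))ᶜ := by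
        simp only [Set.mem_compl_iff, Set.mem_singleton_iff]
        rintro rfl
        exact (Finset.mem_sdiff.mp hj).2 hk
      calc MeasurableSpace.comap (X j) inferInstance
          ≤ MeasurableSpace.comap (fun (ω : Ω) (j : ↥(G k)) => X j ω) inferInstance := by
            rw [comap_pi_finset]; exact le_iSup₂ (f := fun j (_ : j ∈ G k) =>
              MeasurableSpace.comap (X j) inferInstance) j hk
        _ ≤ _ := le_iSup₂ (f := fun k (_ : k ∈ ({i} : Set (Fin Gn))ᶜ) =>
              MeasurableSpace.comap (fun (ω : Ω) (j : ↥(G k)) => X j ω) inferInstance) k hki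
  -- per-group conditional expectation reduction
  have hper : ∀ i : Fin Gn,
      (μ[fun ω' => f i (fun j : ↥(G i) => X j ω') |
        MeasurableSpace.comap (fun (ω : Ω) (j : ↥S) => X j ω) inferInstance])
      =ᵐ[μ]
      (μ[fun ω' => f i (fun j : ↥(G i) => X j ω') |
        MeasurableSpace.comap (fun (ω' : Ω) (j : ↥(S ∩ G i)) => X j ω') inferInstance]) := by
    intro i
    have hsm : StronglyMeasurable[MeasurableSpace.comap
        (fun (ω : Ω) (j : ↥(G i)) => X j ω) inferInstance]
        (fun ω' => f i (fun j : ↥(G i) => X j ω')) :=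
      ((hfmeas i).comp (measurable_iff_comap_le.mpr le_rfl)).stronglyMeasurable
    rw [hsplit i]
    exact condexp_sup_indep_aux (hleT (G i)) (hleT (S ∩ G i)) (hleT (S \ G i))
      hsm (hfint i) (hsub Finset.inter_subset_right) (hindep' i)
  constructor
  · have hsum : (fun ω => ∑ i : Fin Gn, f i (fun j : ↥(G i) => X j ω)) =
        ∑ i : Fin Gn, (fun ω => f i (fun j : ↥(G i) => X j ω)) := by
      ext ω; simp
    have h1 := condExp_finsetSum (μ := μ)
      (m := MeasurableSpace.comap (fun (ω : Ω) (j : ↥S) => X j ω) inferInstance)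
      (s := Finset.univ) (f := fun i ω => f i (fun j : ↥(G i) => X j ω))
      (fun i _ => hfint i)
    rw [← hsum] at h1
    have h2 : ∀ᵐ ω ∂μ, ∀ i : Fin Gn,
        (μ[fun ω' => f i (fun j : ↥(G i) => X j ω') |
          MeasurableSpace.comap (fun (ω : Ω) (j : ↥S) => X j ω) inferInstance]) ω =
        (μ[fun ω' => f i (fun j : ↥(G i) => X j ω') |
          MeasurableSpace.comap (fun (ω' : Ω) (j : ↥(S ∩ G i)) => X j ω') inferInstance]) ω :=
      ae_all_iff.mpr fun i => hper i
    filter_upwards [h1, h2] with ω hω1 hω2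
    rw [hω1, Finset.sum_apply]
    exact Finset.sum_congr rfl fun i _ => hω2 i
  · intro i hSi
    have hemp : IsEmpty ↥(S ∩ G i) := ⟨fun j => absurd j.2 (by simp [hSi])⟩
    have hbot : MeasurableSpace.comap
        (fun (ω' : Ω) (j : ↥(S ∩ G i)) => X j ω') inferInstance = ⊥ := by
      have hpi : (inferInstance : MeasurableSpace (↥(S ∩ G i) → ℝ)) =
          ⨆ j : ↥(S ∩ G i), MeasurableSpace.comap (fun b => b j) inferInstance := rfl
      rw [hpi, iSup_of_empty, MeasurableSpace.comap_bot]
    rw [hbot, condExp_bot]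
end
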